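/- Let N ≥ 1, let π ∈ ℝᴺ be a probability vector and let μ_1, …, μ_N > 0. Set E(T) := Σ_i π_i/μ_i, E(T²) := 2·Σ_i π_i/μ_i² and σ² := E(T²) − E(T)², and assume σ² > 0. Let (ρ_k)_{k≥1} be defined by ρ_1 = 0 and ρ_{k+1} = ρ_k + (1−ρ_k)²/4. For a function n : {1,…,N} → ℕ≥1 define F(n) := (Σ_{i=1}^N π_i·ρ_{n(i)}/μ_i² + E(T²)/2 − E(T)²)/σ². Then F(n) → 1 as all n(i) → ∞; precisely, for every ε > 0 there exists K such that whenever n(i) ≥ K for all i, |F(n) − 1| < ε. -/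

import Mathlib

theorem stmt19 {N : ℕ} (hN : 0 < N) (π μ : Fin N → ℝ)
    (hπnn : ∀ i, 0 ≤ π i) (hπsum : ∑ i, π i = 1) (hμ : ∀ i, 0 < μ i)
    (E₁ E₂ V : ℝ) (hE₁ : E₁ = ∑ i, π i / μ i) (hE₂ : E₂ = 2 * ∑ i, π i / μ i ^ 2)
    (hV : V = E₂ - E₁ ^ 2) (hVpos : 0 < V)
    (ρ : ℕ → ℝ) (hρ1 : ρ 1 = 0)
    (hρ : ∀ k, 1 ≤ k → ρ (k + 1) = ρ k + (1 - ρ k) ^ 2 / 4) :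
    ∀ ε > 0, ∃ K : ℕ, 1 ≤ K ∧ ∀ m : Fin N → ℕ, (∀ i, K ≤ m i) →
      |(∑ i, π i * ρ (m i) / μ i ^ 2 + E₂ / 2 - E₁ ^ 2) / V - 1| < ε := by
  have key : ∀ k : ℕ, 1 ≤ k → 0 ≤ ρ k ∧ ρ k ≤ 1 ∧ 1 - ρ k ≤ 4 / ((k : ℝ) + 3) := by
    intro k hk
    induction k, hk using Nat.le_induction with
    | base => rw [hρ1]; norm_num
    | succ k hk ih =>
      obtain ⟨h0, h1, h2⟩ := ih
      rw [hρ k hk]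
      have hc : (1 : ℝ) ≤ (k : ℝ) := Nat.one_le_cast.mpr hk
      have hk3 : (0:ℝ) < (k:ℝ) + 3 := by linarith
      have hk4 : (0:ℝ) < (k:ℝ) + 4 := by linarith
      refine ⟨by nlinarith, by nlinarith, ?_⟩
      push_cast
      set a := 1 - ρ k with ha
      set b := (4:ℝ) / ((k:ℝ) + 3) with hb
      have hbpos : 0 < b := by positivity
      have hb1 : b ≤ 1 := by rw [hb, div_le_one hk3]; linarith
      have ha0 : 0 ≤ a := by linarith
      have hab : a ≤ b := h2
      have hfab : a - a ^ 2 / 4 ≤ b - b ^ 2 / 4 := by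
        nlinarith [mul_nonneg (sub_nonneg.mpr hab) (by linarith : (0:ℝ) ≤ 1 - (a + b) / 4)]
      have hfb : b - b ^ 2 / 4 ≤ 4 / ((k:ℝ) + 1 + 3) := by
        rw [le_div_iff₀ (by linarith : (0:ℝ) < (k:ℝ) + 1 + 3)]
        have hbb : b * ((k:ℝ) + 3) = 4 := div_mul_cancel₀ _ (ne_of_gt hk3)
        have hbb2 : b ^ 2 * ((k:ℝ) + 3) = 4 * b := by rw [sq, mul_assoc, hbb]; ring
        nlinarith [hbb, hbb2, sq_nonneg b]
      calc 1 - (ρ k + (1 - ρ k) ^ 2 / 4) = a - a ^ 2 / 4 := by rw [ha]; ring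
        _ ≤ b - b ^ 2 / 4 := hfab
        _ ≤ 4 / ((k:ℝ) + 1 + 3) := hfb
  intro ε hε
  set S := ∑ i, π i / μ i ^ 2 with hS
  have hSnn : 0 ≤ S :=
    Finset.sum_nonneg fun i _ => div_nonneg (hπnn i) (by positivity)
  obtain ⟨K₀, hK₀⟩ := exists_nat_gt (4 * S / (V * ε))
  refine ⟨max K₀ 1, le_max_right _ _, ?_⟩
  set K := max K₀ 1 with hKdef
  have hKpos : 0 < K := lt_of_lt_of_le one_pos (le_max_right _ _)
  have hKr : (0:ℝ) < (K:ℝ) := Nat.cast_pos.mpr hKpos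
  have hKgt : 4 * S / (V * ε) < (K:ℝ) := by
    calc 4 * S / (V * ε) < (K₀:ℝ) := hK₀
      _ ≤ (K:ℝ) := Nat.cast_le.mpr (le_max_left _ _)
  intro m hm
  set D := ∑ i, π i * (1 - ρ (m i)) / μ i ^ 2 with hD
  have hterm : ∀ i, 0 ≤ 1 - ρ (m i) ∧ 1 - ρ (m i) ≤ 4 / (K:ℝ) := by
    intro i
    have hm1 : 1 ≤ m i := le_trans hKpos (hm i)
    obtain ⟨h0, h1, h2⟩ := key (m i) hm1
    refine ⟨by linarith, ?_⟩
    calc 1 - ρ (m i) ≤ 4 / ((m i : ℝ) + 3) := h2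
      _ ≤ 4 / (K:ℝ) := by
        apply div_le_div_of_nonneg_left (by norm_num) hKr
        have : (K:ℝ) ≤ (m i : ℝ) := Nat.cast_le.mpr (hm i)
        linarith
  have hDnn : 0 ≤ D :=
    Finset.sum_nonneg fun i _ =>
      div_nonneg (mul_nonneg (hπnn i) (hterm i).1) (by positivity)
  have hDle : D ≤ 4 / (K:ℝ) * S := by
    rw [hD, hS, Finset.mul_sum]
    apply Finset.sum_le_sum
    intro i _
    have hmul : π i * (1 - ρ (m i)) ≤ π i * (4 / (K:ℝ)) :=
      mul_le_mul_of_nonneg_left (hterm i).2 (hπnn i)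
    calc π i * (1 - ρ (m i)) / μ i ^ 2 ≤ π i * (4 / (K:ℝ)) / μ i ^ 2 :=
          (div_le_div_iff_of_pos_right (pow_pos (hμ i) 2)).mpr hmul
      _ = 4 / (K:ℝ) * (π i / μ i ^ 2) := by ring
  have hnum : ∑ i, π i * ρ (m i) / μ i ^ 2 + E₂ / 2 - E₁ ^ 2 = V - D := by
    have hsplit : D = S - ∑ i, π i * ρ (m i) / μ i ^ 2 := by
      rw [hD, hS, ← Finset.sum_sub_distrib]
      exact Finset.sum_congr rfl fun i _ => by ring
    have hE2S : E₂ / 2 = S := by rw [hE₂, hS]; ring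
    rw [hV, hsplit, ← hE2S]
    ring
  rw [hnum]
  have hVne : V ≠ 0 := ne_of_gt hVpos
  have heq : (V - D) / V - 1 = -(D / V) := by field_simp; ring
  rw [heq, abs_neg, abs_of_nonneg (div_nonneg hDnn (le_of_lt hVpos))]
  rw [div_lt_iff₀ hVpos]
  have h4S : 4 * S < (K:ℝ) * (V * ε) := by
    rw [div_lt_iff₀ (by positivity : (0:ℝ) < V * ε)] at hKgt
    linarith
  have : 4 / (K:ℝ) * S < ε * V := by
    rw [div_mul_eq_mul_div, div_lt_iff₀ hKr]
    nlinarith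
  linarith
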